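/- Let f: ℝⁿ → ℝ be convex, x̄ ∈ ℝⁿ with f(x̄) = 0 and 0 ∉ ∂f(x̄), and let γ₁ < d(0, ∂f(x̄)). Then there exists ε > 0 such that for all x with ‖x - x̄‖ < ε, f(x) > 0, and d((x - x̄)/‖x - x̄‖, N_{f⁻¹((-∞,0])}(x̄)) < ε, one has f(x)/‖x - x̄‖ ≥ γ₁. -/

import Mathlib

open RealInnerProductSpace

/-- Abbreviation for Euclidean space used in the auxiliary lemmas. -/
abbrev Eu (n : ℕ) := EuclideanSpace ℝ (Fin n)

section Aux

variable {n : ℕ}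

/-- One-sided directional derivative (inf of difference quotients) at `xbar`
for a function vanishing at `xbar`. -/
noncomputable def dq (f : Eu n → ℝ) (xbar v : Eu n) : ℝ :=
  sInf ((fun t : ℝ => f (xbar + t • v) / t) '' Set.Ioi 0)

variable {f : Eu n → ℝ} {xbar zs : Eu n}

lemma dq_set_nonempty (f : Eu n → ℝ) (xbar v : Eu n) :
    ((fun t : ℝ => f (xbar + t • v) / t) '' Set.Ioi 0).Nonempty :=
  ⟨f (xbar + (1:ℝ) • v) / 1, ⟨1, by norm_num⟩⟩

lemma subgrad_quot_lb (hf0 : f xbar = 0)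
    (hzs : ∀ z, f xbar + ⟪zs, z - xbar⟫ ≤ f z) (v : Eu n) {t : ℝ} (ht : 0 < t) :
    ⟪zs, v⟫ ≤ f (xbar + t • v) / t := by
  have h := hzs (xbar + t • v)
  rw [hf0, add_sub_cancel_left, real_inner_smul_right, zero_add] at h
  rw [le_div_iff₀ ht]
  linarith [h]

lemma dq_bddBelow (hf0 : f xbar = 0)
    (hzs : ∀ z, f xbar + ⟪zs, z - xbar⟫ ≤ f z) (v : Eu n) :
    BddBelow ((fun t : ℝ => f (xbar + t • v) / t) '' Set.Ioi 0) := by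
  refine ⟨⟪zs, v⟫, ?_⟩
  rintro b ⟨t, ht, rfl⟩
  exact subgrad_quot_lb hf0 hzs v ht

lemma dq_le (hf0 : f xbar = 0)
    (hzs : ∀ z, f xbar + ⟪zs, z - xbar⟫ ≤ f z) (v : Eu n) :
    dq f xbar v ≤ f (xbar + v) := by
  have h1 : f (xbar + (1:ℝ) • v) / 1 ∈ (fun t : ℝ => f (xbar + t • v) / t) '' Set.Ioi 0 :=
    ⟨1, by norm_num⟩
  have := csInf_le (dq_bddBelow hf0 hzs v) h1
  simpa [dq] using this

lemma quot_mono (hconv : ConvexOn ℝ Set.univ f) (hf0 : f xbar = 0) (v : Eu n)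
    {s t : ℝ} (hs : 0 < s) (hst : s ≤ t) :
    f (xbar + s • v) / s ≤ f (xbar + t • v) / t := by
  have ht : 0 < t := lt_of_lt_of_le hs hst
  have ha : (0:ℝ) ≤ s / t := le_of_lt (div_pos hs ht)
  have hb : (0:ℝ) ≤ 1 - s / t := by
    rw [sub_nonneg]; exact div_le_one_of_le₀ hst ht.le
  have hkey : xbar + s • v = (1 - s/t) • xbar + (s/t) • (xbar + t • v) := by
    rw [smul_add, smul_smul, div_mul_cancel₀ _ ht.ne']
    module
  have h := hconv.2 (Set.mem_univ xbar) (Set.mem_univ (xbar + t • v)) hb ha (by ring)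
  rw [← hkey, hf0, smul_eq_mul, smul_eq_mul, mul_zero, zero_add] at h
  rw [div_le_div_iff₀ hs ht]
  calc f (xbar + s • v) * t ≤ (s / t * f (xbar + t • v)) * t := by nlinarith
    _ = f (xbar + t • v) * s := by field_simp

lemma dq_add (hconv : ConvexOn ℝ Set.univ f) (hf0 : f xbar = 0)
    (hzs : ∀ z, f xbar + ⟪zs, z - xbar⟫ ≤ f z) (u v : Eu n) :
    dq f xbar (u + v) ≤ dq f xbar u + dq f xbar v := by
  refine le_of_forall_pos_le_add ?_
  intro ε hε
  obtain ⟨b₁, ⟨t₁, ht₁, rfl⟩, hb₁⟩ :=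
    (csInf_lt_iff (dq_bddBelow hf0 hzs u) (dq_set_nonempty f xbar u)).mp
      (show dq f xbar u < dq f xbar u + ε/2 by linarith)
  obtain ⟨b₂, ⟨t₂, ht₂, rfl⟩, hb₂⟩ :=
    (csInf_lt_iff (dq_bddBelow hf0 hzs v) (dq_set_nonempty f xbar v)).mp
      (show dq f xbar v < dq f xbar v + ε/2 by linarith)
  simp only [Set.mem_Ioi] at ht₁ ht₂
  have ht₀ : 0 < min t₁ t₂ := lt_min ht₁ ht₂
  set t₀ : ℝ := min t₁ t₂ with ht₀def
  have hmem : f (xbar + (t₀/2) • (u + v)) / (t₀/2) ∈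
      (fun t : ℝ => f (xbar + t • (u + v)) / t) '' Set.Ioi 0 :=
    ⟨t₀/2, by simpa using half_pos ht₀, rfl⟩
  have step1 : dq f xbar (u + v) ≤ f (xbar + (t₀/2) • (u + v)) / (t₀/2) :=
    csInf_le (dq_bddBelow hf0 hzs (u + v)) hmem
  have hsplit : xbar + (t₀/2) • (u + v)
      = (1/2 : ℝ) • (xbar + t₀ • u) + (1/2 : ℝ) • (xbar + t₀ • v) := by
    module
  have hc := hconv.2 (Set.mem_univ (xbar + t₀ • u)) (Set.mem_univ (xbar + t₀ • v))
    (by norm_num : (0:ℝ) ≤ 1/2) (by norm_num : (0:ℝ) ≤ 1/2) (by norm_num)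
  rw [← hsplit, smul_eq_mul, smul_eq_mul] at hc
  have step2 : f (xbar + (t₀/2) • (u + v)) / (t₀/2)
      ≤ f (xbar + t₀ • u) / t₀ + f (xbar + t₀ • v) / t₀ := by
    rw [← add_div, div_le_div_iff₀ (half_pos ht₀) ht₀]
    nlinarith [hc, ht₀]
  have m1 : f (xbar + t₀ • u) / t₀ ≤ f (xbar + t₁ • u) / t₁ :=
    quot_mono hconv hf0 u ht₀ (min_le_left _ _)
  have m2 : f (xbar + t₀ • v) / t₀ ≤ f (xbar + t₂ • v) / t₂ :=
    quot_mono hconv hf0 v ht₀ (min_le_right _ _)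
  linarith

lemma dq_zero (hf0 : f xbar = 0) : dq f xbar 0 = 0 := by
  have h : ((fun t : ℝ => f (xbar + t • (0:Eu n)) / t) '' Set.Ioi 0) = {0} := by
    ext b
    simp only [smul_zero, add_zero, hf0, zero_div, Set.mem_image, Set.mem_Ioi,
      Set.mem_singleton_iff]
    constructor
    · rintro ⟨t, ht, h⟩; exact h.symm
    · rintro rfl; exact ⟨1, one_pos, rfl⟩
  rw [dq, h, csInf_singleton]

lemma dq_smul_le (hf0 : f xbar = 0)
    (hzs : ∀ z, f xbar + ⟪zs, z - xbar⟫ ≤ f z) {c : ℝ} (hc : 0 < c) (v : Eu n) :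
    dq f xbar (c • v) ≤ c * dq f xbar v := by
  rw [← div_le_iff₀' hc]
  refine le_csInf (dq_set_nonempty f xbar v) ?_
  rintro b ⟨t, ht, rfl⟩
  simp only [Set.mem_Ioi] at ht
  have hmem : f (xbar + (t/c) • (c • v)) / (t/c) ∈
      (fun s : ℝ => f (xbar + s • (c • v)) / s) '' Set.Ioi 0 :=
    ⟨t/c, by simpa using div_pos ht hc, rfl⟩
  have h1 : dq f xbar (c • v) ≤ f (xbar + (t/c) • (c • v)) / (t/c) :=
    csInf_le (dq_bddBelow hf0 hzs (c • v)) hmem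
  have heq : f (xbar + (t/c) • (c • v)) / (t/c) = c * (f (xbar + t • v) / t) := by
    rw [smul_smul, div_mul_cancel₀ _ hc.ne']
    field_simp
  rw [heq] at h1
  rw [div_le_iff₀ hc]
  linarith [h1]

lemma dq_smul (hf0 : f xbar = 0)
    (hzs : ∀ z, f xbar + ⟪zs, z - xbar⟫ ≤ f z) {c : ℝ} (hc : 0 < c) (v : Eu n) :
    dq f xbar (c • v) = c * dq f xbar v := by
  refine le_antisymm (dq_smul_le hf0 hzs hc v) ?_
  have h := dq_smul_le hf0 hzs (inv_pos.mpr hc) (c • v)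
  rw [smul_smul, inv_mul_cancel₀ hc.ne', one_smul] at h
  calc c * dq f xbar v ≤ c * (c⁻¹ * dq f xbar (c • v)) :=
        mul_le_mul_of_nonneg_left h hc.le
    _ = dq f xbar (c • v) := by field_simp

end Aux

/-- The convex subdifferential of `f` at `x`. -/
def subdiff {n : ℕ} (f : EuclideanSpace ℝ (Fin n) → ℝ) (x : EuclideanSpace ℝ (Fin n)) :
    Set (EuclideanSpace ℝ (Fin n)) :=
  {y | ∀ z, f x + ⟪y, z - x⟫ ≤ f z}

/-- The normal cone of a convex set `C` at `x`. -/
def normalCone {n : ℕ} (C : Set (EuclideanSpace ℝ (Fin n))) (x : EuclideanSpace ℝ (Fin n)) :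
    Set (EuclideanSpace ℝ (Fin n)) :=
  {v | ∀ y ∈ C, ⟪v, y - x⟫ ≤ 0}

section Key
variable {n : ℕ} {f : Eu n → ℝ} {xbar zstar : Eu n}

/-- Key support inequality: every nonzero vector of the normal cone of the sublevel set
has support value at least `γ ‖w‖` on the subdifferential, for any `γ` below the distance
from `0` to the subdifferential. -/
lemma normal_support (hconv : ConvexOn ℝ Set.univ f) (hf0 : f xbar = 0)
    (hzstar : zstar ∈ subdiff f xbar)
    (hd2 : ∀ z ∈ subdiff f xbar, ‖zstar‖ ^ 2 ≤ ⟪zstar, z⟫)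
    {γ : ℝ} (hγpos : 0 < γ) (hγd : γ < ‖zstar‖)
    {w : Eu n} (hwN : w ∈ normalCone {z | f z ≤ 0} xbar) (hw0 : w ≠ 0) :
    ∃ z ∈ subdiff f xbar, γ * ‖w‖ ≤ ⟪z, w⟫ := by
  by_contra hcon
  push_neg at hcon
  have hzs : ∀ z, f xbar + ⟪zstar, z - xbar⟫ ≤ f z := hzstar
  set d : ℝ := ‖zstar‖ with hddef
  have hdpos : 0 < d := lt_trans hγpos hγd
  have hwpos : 0 < ‖w‖ := norm_pos_iff.mpr hw0
  set θ : ℝ := γ * ‖w‖ / d ^ 2 with hθdef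
  have hθpos : 0 < θ := by positivity
  set v₀ : Eu n := w - θ • zstar with hv₀def
  -- ⟪w, v₀⟫ > 0
  have hwz : ⟪w, zstar⟫ ≤ ‖w‖ * d := real_inner_le_norm w zstar
  have hinner : ⟪w, v₀⟫ = ‖w‖ ^ 2 - θ * ⟪w, zstar⟫ := by
    rw [hv₀def, inner_sub_right, real_inner_smul_right, real_inner_self_eq_norm_sq]
  have hwv₀ : 0 < ⟪w, v₀⟫ := by
    rw [hinner, hθdef]
    rw [div_mul_eq_mul_div, sub_pos, div_lt_iff₀ (by positivity : (0:ℝ) < d ^ 2)]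
    calc γ * ‖w‖ * ⟪w, zstar⟫ ≤ γ * ‖w‖ * (‖w‖ * d) := by
          exact mul_le_mul_of_nonneg_left hwz (by positivity)
      _ < ‖w‖ ^ 2 * d ^ 2 := by nlinarith [mul_pos (mul_pos (sub_pos.mpr hγd) (mul_pos hwpos hwpos)) hdpos]
  have hv₀ne : v₀ ≠ 0 := by
    intro h
    rw [h, inner_zero_right] at hwv₀
    exact lt_irrefl 0 hwv₀
  -- Hahn-Banach extension of `c • v₀ ↦ c • dq f xbar v₀` dominated by `dq f xbar`
  set pm : EuclideanSpace ℝ (Fin n) →ₗ.[ℝ] ℝ :=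
    LinearPMap.mkSpanSingleton v₀ (dq f xbar v₀) hv₀ne with hpmdef
  have hdom : ∀ x : pm.domain, pm x ≤ dq f xbar x := by
    rintro ⟨x, hx⟩
    obtain ⟨c, rfl⟩ := Submodule.mem_span_singleton.mp hx
    have happ : pm ⟨c • v₀, hx⟩ = c • dq f xbar v₀ :=
      LinearPMap.mkSpanSingleton'_apply v₀ (dq f xbar v₀) _ c hx
    rw [happ]
    have hval : ((⟨c • v₀, hx⟩ : pm.domain) : EuclideanSpace ℝ (Fin n)) = c • v₀ := rfl
    rw [hval]
    rcases lt_trichotomy c 0 with hc | hc | hc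
    · have h1 : dq f xbar (c • v₀) = (-c) * dq f xbar (-v₀) := by
        have : c • v₀ = (-c) • (-v₀) := by module
        rw [this, dq_smul hf0 hzs (by linarith) (-v₀)]
      have h2 : 0 ≤ dq f xbar v₀ + dq f xbar (-v₀) := by
        have := dq_add hconv hf0 hzs v₀ (-v₀)
        rw [add_neg_cancel, dq_zero hf0] at this
        linarith
      rw [h1, smul_eq_mul]
      nlinarith
    · subst hc
      rw [zero_smul, zero_smul, dq_zero hf0]
    · rw [dq_smul hf0 hzs hc v₀, smul_eq_mul]
  obtain ⟨g, hg1, hg2⟩ := exists_extension_of_le_sublinear pm (dq f xbar)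
    (fun c hc x => dq_smul hf0 hzs hc x) (dq_add hconv hf0 hzs) hdom
  -- Riesz representation
  set z₀ : Eu n := (InnerProductSpace.toDual ℝ (Eu n)).symm
    (LinearMap.toContinuousLinearMap g) with hz₀def
  have hz₀ : ∀ x, ⟪z₀, x⟫ = g x := fun x => InnerProductSpace.toDual_symm_apply
  -- z₀ is a subgradient
  have hz₀S : z₀ ∈ subdiff f xbar := by
    intro z
    have h1 : ⟪z₀, z - xbar⟫ ≤ dq f xbar (z - xbar) := by rw [hz₀ (z - xbar)]; exact hg2 _
    have h2 : dq f xbar (z - xbar) ≤ f (xbar + (z - xbar)) := dq_le hf0 hzs _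
    rw [add_sub_cancel] at h2
    rw [hf0, zero_add]
    linarith
  -- g v₀ = dq f xbar v₀ < 0
  have hgv₀ : g v₀ = dq f xbar v₀ := by
    have := hg1 ⟨v₀, Submodule.mem_span_singleton_self v₀⟩
    rw [this, LinearPMap.mkSpanSingleton_apply]
  have hneg : dq f xbar v₀ < 0 := by
    have hc := hcon z₀ hz₀S
    have hzz : d ^ 2 ≤ ⟪zstar, z₀⟫ := hd2 z₀ hz₀S
    have : dq f xbar v₀ = ⟪z₀, w⟫ - θ * ⟪z₀, zstar⟫ := by
      rw [← hgv₀, ← hz₀ v₀, hv₀def, inner_sub_right, real_inner_smul_right]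
    rw [this]
    have hcomm : ⟪z₀, zstar⟫ = ⟪zstar, z₀⟫ := real_inner_comm _ _
    have hθd : θ * d ^ 2 = γ * ‖w‖ := by
      rw [hθdef]; field_simp
    nlinarith [mul_le_mul_of_nonneg_left hzz hθpos.le]
  -- extract a point with negative f value
  obtain ⟨b, ⟨t, ht, rfl⟩, hb⟩ :=
    (csInf_lt_iff (dq_bddBelow hf0 hzs v₀) (dq_set_nonempty f xbar v₀)).mp hneg
  simp only [Set.mem_Ioi] at ht
  have hfneg : f (xbar + t • v₀) < 0 := by
    by_contra hge
    push_neg at hge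
    exact absurd hb (not_lt.mpr (div_nonneg hge ht.le))
  have := hwN (xbar + t • v₀) (le_of_lt hfneg)
  rw [add_sub_cancel_left, real_inner_smul_right] at this
  nlinarith
end Key

/-- First intermediate inequality: `f(x)/‖x - x̄‖ ≥ γ₁` for `x` near `x̄` in
(approximately) normal cone directions. -/
theorem intermediate_inequality_one
    {n : ℕ} (f : EuclideanSpace ℝ (Fin n) → ℝ)
    (hconv : ConvexOn ℝ Set.univ f)
    (xbar : EuclideanSpace ℝ (Fin n)) (hf0 : f xbar = 0)
    (h0 : (0:EuclideanSpace ℝ (Fin n)) ∉ subdiff f xbar)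
    (γ₁ : ℝ) (hγ₁ : γ₁ < Metric.infDist 0 (subdiff f xbar)) :
    ∃ ε > (0:ℝ), ∀ x : EuclideanSpace ℝ (Fin n),
      ‖x - xbar‖ < ε → 0 < f x →
      Metric.infDist (‖x - xbar‖⁻¹ • (x - xbar)) (normalCone {z | f z ≤ 0} xbar) < ε →
      γ₁ ≤ f x / ‖x - xbar‖ := by
  rcases le_or_gt γ₁ 0 with hγ₁0 | hγ₁0
  · -- trivial case : `γ₁ ≤ 0`
    refine ⟨1, one_pos, fun x hx1 hx2 hx3 => ?_⟩
    have hxne : x - xbar ≠ 0 := by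
      intro h
      rw [sub_eq_zero] at h
      rw [h, hf0] at hx2
      exact lt_irrefl 0 hx2
    have hr : 0 < ‖x - xbar‖ := norm_pos_iff.mpr hxne
    have := div_pos hx2 hr
    linarith
  · -- main case : `0 < γ₁`
    set S := subdiff f xbar with hSdef
    have hSne : S.Nonempty := by
      by_contra h
      rw [Set.not_nonempty_iff_eq_empty] at h
      rw [h, Metric.infDist_empty] at hγ₁
      linarith
    have hSclosed : IsClosed S := by
      have hS : S = ⋂ z, {y : EuclideanSpace ℝ (Fin n) | f xbar + ⟪y, z - xbar⟫ ≤ f z} := by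
        ext y
        simp only [hSdef, subdiff, Set.mem_setOf_eq, Set.mem_iInter]
      rw [hS]
      exact isClosed_iInter fun z =>
        isClosed_le (continuous_const.add (Continuous.inner continuous_id continuous_const))
          continuous_const
    have hSconvex : Convex ℝ S := by
      intro z₁ hz₁ z₂ hz₂ a b ha hb hab
      intro y
      have h₁ := hz₁ y
      have h₂ := hz₂ y
      have hexp : ⟪a • z₁ + b • z₂, y - xbar⟫ = a * ⟪z₁, y - xbar⟫ + b * ⟪z₂, y - xbar⟫ := by
        rw [inner_add_left, real_inner_smul_left, real_inner_smul_left]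
      rw [hexp]
      have e1 : f xbar = a * f xbar + b * f xbar := by rw [← add_mul, hab, one_mul]
      have e2 : f y = a * f y + b * f y := by rw [← add_mul, hab, one_mul]
      linarith [mul_le_mul_of_nonneg_left h₁ ha, mul_le_mul_of_nonneg_left h₂ hb, e1, e2]
    obtain ⟨zstar, hzstarS, hzdist⟩ := hSclosed.exists_infDist_eq_dist hSne 0
    have hzn : ‖zstar‖ = Metric.infDist 0 S := by
      rw [hzdist, dist_zero_left]
    have hγd : γ₁ < ‖zstar‖ := by rw [hzn]; exact hγ₁
    have hdpos : 0 < ‖zstar‖ := lt_trans hγ₁0 hγd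
    -- projection inequality
    have hproj : ‖(0:EuclideanSpace ℝ (Fin n)) - zstar‖ = ⨅ w : S, ‖(0:EuclideanSpace ℝ (Fin n)) - w‖ := by
      rw [zero_sub, norm_neg, hzn, Metric.infDist_eq_iInf]
      exact iInf_congr fun w => by rw [dist_eq_norm, zero_sub, norm_neg]
    have hd2 : ∀ z ∈ S, ‖zstar‖ ^ 2 ≤ ⟪zstar, z⟫ := by
      intro z hz
      have h := (norm_eq_iInf_iff_real_inner_le_zero hSconvex hzstarS).mp hproj z hz
      rw [zero_sub, inner_neg_left, neg_nonpos] at h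
      rw [inner_sub_right, real_inner_self_eq_norm_sq] at h
      linarith
    -- Lipschitz-type bound on the subdifferential
    have hcont : Continuous f := hconv.locallyLipschitz.continuous
    obtain ⟨y₀, hy₀, hy₀max⟩ := (isCompact_closedBall xbar 1).exists_isMaxOn
      ⟨xbar, Metric.mem_closedBall_self zero_le_one⟩ hcont.continuousOn
    set L : ℝ := max (f y₀) 1 with hLdef
    have hL1 : (1:ℝ) ≤ L := le_max_right _ _
    have hLpos : 0 < L := lt_of_lt_of_le one_pos hL1
    have hLbound : ∀ z ∈ S, ‖z‖ ≤ L := by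
      intro z hz
      rcases eq_or_ne z 0 with rfl | hz0
      · simpa using hLpos.le
      · have h1 := hz (xbar + ‖z‖⁻¹ • z)
        rw [hf0, zero_add, add_sub_cancel_left, real_inner_smul_right,
          real_inner_self_eq_norm_sq] at h1
        have hzpos : 0 < ‖z‖ := norm_pos_iff.mpr hz0
        have heq : ‖z‖⁻¹ * ‖z‖ ^ 2 = ‖z‖ := by field_simp
        rw [heq] at h1
        have hmem : xbar + ‖z‖⁻¹ • z ∈ Metric.closedBall xbar 1 := by
          rw [Metric.mem_closedBall, dist_eq_norm, add_sub_cancel_left]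
          rw [norm_smul, norm_inv, norm_norm, inv_mul_cancel₀ (norm_ne_zero_iff.mpr hz0)]
        have h2 := hy₀max hmem
        exact le_trans (le_trans h1 h2) (le_max_left _ _)
    -- choose γ and ε
    set γ : ℝ := (γ₁ + ‖zstar‖) / 2 with hγdef
    have hγpos : 0 < γ := by positivity
    have hγlt : γ < ‖zstar‖ := by rw [hγdef]; linarith
    have hγgt : γ₁ < γ := by rw [hγdef]; linarith
    set ε : ℝ := min ((γ - γ₁) / (γ + L)) 2⁻¹ with hεdef
    have hεpos : 0 < ε := by
      apply lt_min
      · apply div_pos (by linarith) (by linarith)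
      · norm_num
    refine ⟨ε, hεpos, fun x hx1 hx2 hx3 => ?_⟩
    have hxne : x - xbar ≠ 0 := by
      intro h
      rw [sub_eq_zero] at h
      rw [h, hf0] at hx2
      exact lt_irrefl 0 hx2
    have hr : 0 < ‖x - xbar‖ := norm_pos_iff.mpr hxne
    set u : EuclideanSpace ℝ (Fin n) := ‖x - xbar‖⁻¹ • (x - xbar) with hudef
    have hu : ‖u‖ = 1 := by
      rw [hudef, norm_smul, norm_inv, norm_norm, inv_mul_cancel₀ (norm_ne_zero_iff.mpr hxne)]
    have hNne : (normalCone {z | f z ≤ 0} xbar).Nonempty := by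
      refine ⟨0, fun y hy => ?_⟩
      rw [inner_zero_left]
    obtain ⟨w, hwN, hw⟩ := (Metric.infDist_lt_iff hNne).mp hx3
    rw [dist_eq_norm] at hw
    have hε2 : ε ≤ 2⁻¹ := min_le_right _ _
    have hεA : ε ≤ (γ - γ₁) / (γ + L) := min_le_left _ _
    have hwlb : 1 - ε ≤ ‖w‖ := by
      have h := norm_sub_norm_le u w
      rw [hu] at h
      linarith
    have hw0 : w ≠ 0 := by
      intro h
      rw [h, norm_zero] at hwlb
      linarith
    obtain ⟨z, hzS, hz⟩ := normal_support hconv hf0 hzstarS hd2 hγpos hγlt hwN hw0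
    have hzu : γ₁ ≤ ⟪z, u⟫ := by
      have h1 : ⟪z, u⟫ = ⟪z, w⟫ + ⟪z, u - w⟫ := by
        rw [← inner_add_right]
        congr 1
        abel
      have h2 : -(‖z‖ * ‖u - w‖) ≤ ⟪z, u - w⟫ := by
        have habs := abs_real_inner_le_norm z (u - w)
        have hneg := neg_abs_le (⟪z, u - w⟫ : ℝ)
        linarith
      have h3 : ‖z‖ * ‖u - w‖ ≤ L * ε :=
        mul_le_mul (hLbound z hzS) hw.le (norm_nonneg _) hLpos.le
      have h4 : γ * (1 - ε) ≤ γ * ‖w‖ := mul_le_mul_of_nonneg_left hwlb hγpos.le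
      have h5 : ε * (γ + L) ≤ γ - γ₁ := by
        rw [← le_div_iff₀ (by linarith : (0:ℝ) < γ + L)]
        exact hεA
      have hεγ : ε * γ ≤ ε * γ := le_refl _
      rw [h1]
      nlinarith [hεpos, hγpos]
    have hfx : γ₁ * ‖x - xbar‖ ≤ f x := by
      have h1 := hzS x
      have h3 : ⟪z, x - xbar⟫ = ‖x - xbar‖ * ⟪z, u⟫ := by
        rw [hudef, real_inner_smul_right]
        field_simp
      rw [hf0, zero_add, h3] at h1
      nlinarith [mul_le_mul_of_nonneg_left hzu hr.le]
    rw [le_div_iff₀ hr]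
    exact hfx
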